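/- Consider the linearized closed-loop wind-turbine/grid model: assume κ ≥ 0 and the gain-ratio condition K_d^gsc / K_θ^gsc = K_d^msc / K_θ^msc. Then the origin of the system is asymptotically stable; in particular, every solution x : [0,∞) → ℝ⁶ of the system satisfies x(t) → 0 as t → ∞, and for every ε > 0 there exists δ > 0 such that ‖x(0)‖ < δ implies ‖x(t)‖ < ε for all t ≥ 0. -/

import Mathlib

open Filter Topology
set_option maxHeartbeats 4000000

/-- A solution of the linearized closed-loop wind-turbine/grid model with state
`x = (ρ₁, ρ₂, ω₁, ω₂, v, P)` (indices `0,…,5`). -/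
def IsSolution (Kdg Kdm Kθg Kθm bg bmsc Jg Jwt ω0 ωdel Cdc Tg kg κ : ℝ)
    (x : ℝ → EuclideanSpace ℝ (Fin 6)) : Prop :=
  ∀ t : ℝ, 0 ≤ t →
    HasDerivAt (fun s => x s 0)
      (-(Kdg / Cdc) * (bg * x t 0 + bmsc * x t 1) - x t 2 + Kθg * x t 4) t ∧
    HasDerivAt (fun s => x s 1)
      (-(Kdm / Cdc) * (bg * x t 0 + bmsc * x t 1) - x t 3 + Kθm * x t 4) t ∧
    HasDerivAt (fun s => x s 2) ((bg * x t 0 + x t 5) / (Jg * ω0)) t ∧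
    HasDerivAt (fun s => x s 3) ((bmsc * x t 1 - κ * x t 3) / (Jwt * ωdel)) t ∧
    HasDerivAt (fun s => x s 4) (-(bg * x t 0 + bmsc * x t 1) / Cdc) t ∧
    HasDerivAt (fun s => x s 5) ((-kg * x t 2 - x t 5) / Tg) t

lemma young2 (c p q u w : ℝ) (hp : 0 < p) (h : c^2 ≤ 4*p*q) :
    c*(u*w) ≤ p*u^2 + q*w^2 := by
  nlinarith [sq_nonneg (c*w - 2*p*u), sq_nonneg w, mul_pos hp hp]

lemma splitBound (b1 b2 q1 q2 cc p1 p2 : ℝ) (hb2 : 0 < b2) (hcc : 0 ≤ cc)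
    (h1 : cc*(2/b2^2) ≤ q1) (h2 : cc*(2*b1^2/b2^2) ≤ q2) :
    cc*p2^2 ≤ q1*(b1*p1+b2*p2)^2 + q2*p1^2 := by
  have hb2' : (0:ℝ) < b2^2 := by positivity
  have hs : p2^2 ≤ (2/b2^2)*(b1*p1+b2*p2)^2 + (2*b1^2/b2^2)*p1^2 := by
    have h1' : b2^2*p2^2 ≤ 2*(b1*p1+b2*p2)^2 + 2*b1^2*p1^2 := by
      nlinarith [sq_nonneg (b1*p1+b2*p2+b1*p1)]
    calc p2^2 = (b2^2*p2^2)/b2^2 := by field_simp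
    _ ≤ (2*(b1*p1+b2*p2)^2 + 2*b1^2*p1^2)/b2^2 := (div_le_div_iff_of_pos_right hb2').mpr h1'
    _ = (2/b2^2)*(b1*p1+b2*p2)^2 + (2*b1^2/b2^2)*p1^2 := by ring
  have h := mul_le_mul_of_nonneg_left hs hcc
  nlinarith [mul_le_mul_of_nonneg_right h1 (sq_nonneg (b1*p1+b2*p2)),
    mul_le_mul_of_nonneg_right h2 (sq_nonneg p1)]

lemma keyIneq (b1 b2 M1 M2 C Tg kg Ktg Ktm Kdg Kdm κ ep1 ep2 ep3 ep4 mu : ℝ)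
    (hb1 : 0 < b1) (hb2 : 0 < b2) (hM1 : 0 < M1) (hM2 : 0 < M2) (hC : 0 < C)
    (hTg : 0 < Tg) (hkg : 0 < kg) (hKtg : 0 < Ktg) (hKdg : 0 < Kdg)
    (hKdm : 0 < Kdm) (hκ : 0 ≤ κ)
    (he1 : 0 < ep1) (he2 : 0 < ep2) (he3 : 0 < ep3) (he4 : 0 < ep4)
    (s1 : (ep1*(1/Tg))^2 ≤ 4*(ep1*(kg/Tg)/8)*((1/(Kdg*kg))/8))
    (s2 : (ep1*(b1/M1))^2 ≤ 4*(ep2*(b1/M1)/8)*((1/(Kdg*kg))/8))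
    (s3 : ep1*(1/M1) ≤ (1/(Kdg*kg))/8)
    (s4 : ep2 ≤ ep1*(kg/Tg)/8)
    (s5 : (ep2*(1/M1))^2 ≤ 4*(ep2*(b1/M1)/8)*((1/(Kdg*kg))/8))
    (s6 : (ep2*(Kdg/C))^2 ≤ 4*(ep1*(kg/Tg)/8)*((1/C)/8))
    (s7 : (ep2*Ktg)^2 ≤ 4*(ep3*Ktg/8)*(ep1*(kg/Tg)/8))
    (s8 : ep3^2 ≤ 4*(ep3*Ktg/8)*(ep1*(kg/Tg)/8))
    (s9 : (ep3*(1/C))^2 ≤ 4*(ep2*(b1/M1)/8)*((1/C)/8))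
    (s10 : (ep3*(Kdg/C))^2 ≤ 4*(ep3*Ktg/8)*((1/C)/8))
    (s11 : ep4*(b2/M2)*(2/b2^2) ≤ (1/C)/8)
    (s12 : ep4*(b2/M2)*(2*b1^2/b2^2) ≤ ep2*(b1/M1)/8)
    (s13 : (ep4*(Kdm/C))^2 ≤ 4*(ep4/8)*((1/C)/8))
    (s14 : (ep4*Ktm)^2 ≤ 4*(ep4/8)*(ep3*Ktg/8))
    (s15 : (2*ep4*(κ/M2)^2)*(2/b2^2) ≤ (1/C)/8)
    (s16 : (2*ep4*(κ/M2)^2)*(2*b1^2/b2^2) ≤ ep2*(b1/M1)/8)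
    (hmu1 : mu ≤ (1/C)/4) (hmu2 : mu ≤ (1/(Kdg*kg))/2)
    (hmu3 : mu ≤ 3*(ep1*(kg/Tg))/8) (hmu4 : mu ≤ 3*(ep2*(b1/M1))/8)
    (hmu5 : mu ≤ ep3*Ktg/2) (hmu6 : mu ≤ 5*ep4/8) :
    ∀ p1 p2 w1 w2 v P : ℝ,
      -(1/C)*(b1*p1+b2*p2)^2 - (κ/Kdm)*w2^2 - (1/(Kdg*kg))*P^2
      + ep1*(-(kg/Tg)*w1^2 - (1/Tg)*(w1*P) + (b1/M1)*(p1*P) + (1/M1)*P^2)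
      + ep2*(-(b1/M1)*p1^2 - (1/M1)*(p1*P) + (Kdg/C)*(w1*(b1*p1+b2*p2)) + w1^2 - Ktg*(v*w1))
      + ep3*(-Ktg*v^2 + (1/C)*(p1*(b1*p1+b2*p2)) + (Kdg/C)*(v*(b1*p1+b2*p2)) + (v*w1))
      + ep4*(-w2^2 - (Kdm/C)*(w2*(b1*p1+b2*p2)) + Ktm*(w2*v) + (b2/M2)*p2^2 - (κ/M2)*(w2*p2))
      ≤ -mu*((b1*p1+b2*p2)^2 + P^2 + w1^2 + p1^2 + v^2 + w2^2) := by
  intro p1 p2 w1 w2 v P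
  have H1 := young2 (-(ep1*(1/Tg))) (ep1*(kg/Tg)/8) ((1/(Kdg*kg))/8) w1 P
    (by positivity) (by rw [neg_sq]; exact s1)
  have H2 := young2 (ep1*(b1/M1)) (ep2*(b1/M1)/8) ((1/(Kdg*kg))/8) p1 P
    (by positivity) s2
  have H3 : ep1*(1/M1)*P^2 ≤ ((1/(Kdg*kg))/8)*P^2 :=
    mul_le_mul_of_nonneg_right s3 (sq_nonneg P)
  have H4 : ep2*w1^2 ≤ (ep1*(kg/Tg)/8)*w1^2 :=
    mul_le_mul_of_nonneg_right s4 (sq_nonneg w1)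
  have H5 := young2 (-(ep2*(1/M1))) (ep2*(b1/M1)/8) ((1/(Kdg*kg))/8) p1 P
    (by positivity) (by rw [neg_sq]; exact s5)
  have H6 := young2 (ep2*(Kdg/C)) (ep1*(kg/Tg)/8) ((1/C)/8) w1 (b1*p1+b2*p2)
    (by positivity) s6
  have H7 := young2 (-(ep2*Ktg)) (ep3*Ktg/8) (ep1*(kg/Tg)/8) v w1
    (by positivity) (by rw [neg_sq]; exact s7)
  have H8 := young2 ep3 (ep3*Ktg/8) (ep1*(kg/Tg)/8) v w1 (by positivity) s8
  have H9 := young2 (ep3*(1/C)) (ep2*(b1/M1)/8) ((1/C)/8) p1 (b1*p1+b2*p2)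
    (by positivity) s9
  have H10 := young2 (ep3*(Kdg/C)) (ep3*Ktg/8) ((1/C)/8) v (b1*p1+b2*p2)
    (by positivity) s10
  have H11 := young2 (-(ep4*(Kdm/C))) (ep4/8) ((1/C)/8) w2 (b1*p1+b2*p2)
    (by positivity) (by rw [neg_sq]; exact s13)
  have H12 := young2 (ep4*Ktm) (ep4/8) (ep3*Ktg/8) w2 v (by positivity) s14
  have H13 : ep4*(b2/M2)*p2^2 ≤ ((1/C)/8)*(b1*p1+b2*p2)^2 + (ep2*(b1/M1)/8)*p1^2 :=
    splitBound b1 b2 _ _ _ p1 p2 hb2 (by positivity) s11 s12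
  have H14 := young2 (-(ep4*(κ/M2))) (ep4/8) (2*ep4*(κ/M2)^2) w2 p2
    (by positivity) (le_of_eq (by ring))
  have H14b : (2*ep4*(κ/M2)^2)*p2^2 ≤ ((1/C)/8)*(b1*p1+b2*p2)^2 + (ep2*(b1/M1)/8)*p1^2 :=
    splitBound b1 b2 _ _ _ p1 p2 hb2 (by positivity) s15 s16
  have Hk : 0 ≤ (κ/Kdm)*w2^2 := by positivity
  have Hm1 : mu*(b1*p1+b2*p2)^2 ≤ ((1/C)/4)*(b1*p1+b2*p2)^2 :=
    mul_le_mul_of_nonneg_right hmu1 (sq_nonneg _)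
  have Hm2 : mu*P^2 ≤ ((1/(Kdg*kg))/2)*P^2 :=
    mul_le_mul_of_nonneg_right hmu2 (sq_nonneg _)
  have Hm3 : mu*w1^2 ≤ (3*(ep1*(kg/Tg))/8)*w1^2 :=
    mul_le_mul_of_nonneg_right hmu3 (sq_nonneg _)
  have Hm4 : mu*p1^2 ≤ (3*(ep2*(b1/M1))/8)*p1^2 :=
    mul_le_mul_of_nonneg_right hmu4 (sq_nonneg _)
  have Hm5 : mu*v^2 ≤ (ep3*Ktg/2)*v^2 :=
    mul_le_mul_of_nonneg_right hmu5 (sq_nonneg _)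
  have Hm6 : mu*w2^2 ≤ (5*ep4/8)*w2^2 :=
    mul_le_mul_of_nonneg_right hmu6 (sq_nonneg _)
  linarith only [H1, H2, H3, H4, H5, H6, H7, H8, H9, H10, H11, H12, H13, H14, H14b,
    Hk, Hm1, Hm2, Hm3, Hm4, Hm5, Hm6]

lemma chooseEps (al be k1 k2 k3 a1 a3 c2 f1 f2 f3 f4 g1 g2 dmin : ℝ)
    (hal : 0 < al) (hbe : 0 < be) (hk1 : 0 < k1) (hk2 : 0 < k2) (hk3 : 0 < k3)
    (ha1 : 0 < a1) (ha3 : 0 < a3) (hc2 : 0 < c2) (hf1 : 0 < f1) (hf2 : 0 < f2)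
    (hf3 : 0 < f3) (hf4 : 0 ≤ f4) (hg1 : 0 < g1) (hg2 : 0 ≤ g2) (hdmin : 0 < dmin) :
    ∃ ep1 ep2 ep3 ep4 : ℝ, 0 < ep1 ∧ 0 < ep2 ∧ 0 < ep3 ∧ 0 < ep4 ∧
      ep1+ep2+ep3+ep4 ≤ dmin ∧
      (ep1*a1)^2 ≤ 4*(ep1*k1/8)*(be/8) ∧
      (ep1*k2)^2 ≤ 4*(ep2*k2/8)*(be/8) ∧
      ep1*a3 ≤ be/8 ∧
      ep2 ≤ ep1*k1/8 ∧
      (ep2*a3)^2 ≤ 4*(ep2*k2/8)*(be/8) ∧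
      (ep2*c2)^2 ≤ 4*(ep1*k1/8)*(al/8) ∧
      (ep2*k3)^2 ≤ 4*(ep3*k3/8)*(ep1*k1/8) ∧
      ep3^2 ≤ 4*(ep3*k3/8)*(ep1*k1/8) ∧
      (ep3*al)^2 ≤ 4*(ep2*k2/8)*(al/8) ∧
      (ep3*c2)^2 ≤ 4*(ep3*k3/8)*(al/8) ∧
      ep4*f1*g1 ≤ al/8 ∧
      ep4*f1*g2 ≤ ep2*k2/8 ∧
      (ep4*f2)^2 ≤ 4*(ep4/8)*(al/8) ∧
      (ep4*f3)^2 ≤ 4*(ep4/8)*(ep3*k3/8) ∧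
      (2*ep4*f4^2)*g1 ≤ al/8 ∧
      (2*ep4*f4^2)*g2 ≤ ep2*k2/8 := by
  set K2 : ℝ := 16*k2/be + 1 with hK2
  have hK2pos : 0 < K2 := by rw [hK2]; positivity
  have hK2ge : 16*k2/be ≤ K2 := by rw [hK2]; linarith
  have hK2ge' : 16*k2 ≤ K2*be := by
    have := (div_le_iff₀ hbe).mp hK2ge; linarith
  set K3 : ℝ := 16*k3*K2^2/k1 + 1 with hK3
  have hK3pos : 0 < K3 := by rw [hK3]; positivity
  have hK3ge' : 16*k3*K2^2 ≤ K3*k1 := by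
    have h0 : 16*k3*K2^2/k1 ≤ K3 := by rw [hK3]; linarith
    have := (div_le_iff₀ hk1).mp h0; linarith
  set m4 : ℝ := min (al/(8*f1*g1)) (min (K2*k2/(8*f1*(g2+1))) (min (al/(16*f2^2))
    (min (K3*k3/(16*f3^2)) (min (al/(16*(f4^2+1)*g1)) (K2*k2/(16*(f4^2+1)*(g2+1)))))))
    with hm4
  have hm4pos : 0 < m4 := by
    rw [hm4]
    refine lt_min (by positivity) (lt_min (by positivity) (lt_min (by positivity)
      (lt_min (by positivity) (lt_min (by positivity) (by positivity)))))
  have hm4a : m4 ≤ al/(8*f1*g1) := min_le_left _ _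
  have hm4b : m4 ≤ K2*k2/(8*f1*(g2+1)) := le_trans (min_le_right _ _) (min_le_left _ _)
  have hm4c : m4 ≤ al/(16*f2^2) :=
    le_trans (min_le_right _ _) (le_trans (min_le_right _ _) (min_le_left _ _))
  have hm4d : m4 ≤ K3*k3/(16*f3^2) :=
    le_trans (min_le_right _ _) (le_trans (min_le_right _ _)
      (le_trans (min_le_right _ _) (min_le_left _ _)))
  have hm4e : m4 ≤ al/(16*(f4^2+1)*g1) :=
    le_trans (min_le_right _ _) (le_trans (min_le_right _ _)
      (le_trans (min_le_right _ _) (le_trans (min_le_right _ _) (min_le_left _ _))))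
  have hm4f : m4 ≤ K2*k2/(16*(f4^2+1)*(g2+1)) :=
    le_trans (min_le_right _ _) (le_trans (min_le_right _ _)
      (le_trans (min_le_right _ _) (le_trans (min_le_right _ _) (min_le_right _ _))))
  set eta : ℝ := min 1 (min (k1*be/(16*a1^2)) (min (be/(8*a3)) (min (k1/(8*K2))
    (min (k2*be/(16*K2*a3^2)) (min (k1*al/(16*K2^2*c2^2)) (min (k1*k3/(16*K3))
    (min (K2*k2/(16*K3^2*al)) (min (k3*al/(16*K3*c2^2)) (min (dmin/4)
    (min (dmin/(4*K2)) (min (dmin/(4*K3)) (dmin/(4*(m4+1)))))))))))))) with heta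
  have hepos : 0 < eta := by
    rw [heta]
    refine lt_min one_pos (lt_min (by positivity) (lt_min (by positivity)
      (lt_min (by positivity) (lt_min (by positivity) (lt_min (by positivity)
      (lt_min (by positivity) (lt_min (by positivity) (lt_min (by positivity)
      (lt_min (by positivity) (lt_min (by positivity)
      (lt_min (by positivity) (by positivity))))))))))))
  have he1 : eta ≤ 1 := min_le_left _ _
  have hE1 : eta ≤ k1*be/(16*a1^2) := le_trans (min_le_right _ _) (min_le_left _ _)
  have hE2 : eta ≤ be/(8*a3) :=
    le_trans (min_le_right _ _) (le_trans (min_le_right _ _) (min_le_left _ _))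
  have hE3 : eta ≤ k1/(8*K2) :=
    le_trans (min_le_right _ _) (le_trans (min_le_right _ _)
      (le_trans (min_le_right _ _) (min_le_left _ _)))
  have hE4 : eta ≤ k2*be/(16*K2*a3^2) :=
    le_trans (min_le_right _ _) (le_trans (min_le_right _ _)
      (le_trans (min_le_right _ _) (le_trans (min_le_right _ _) (min_le_left _ _))))
  have hE5 : eta ≤ k1*al/(16*K2^2*c2^2) :=
    le_trans (min_le_right _ _) (le_trans (min_le_right _ _)
      (le_trans (min_le_right _ _) (le_trans (min_le_right _ _)
      (le_trans (min_le_right _ _) (min_le_left _ _)))))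
  have hE6 : eta ≤ k1*k3/(16*K3) :=
    le_trans (min_le_right _ _) (le_trans (min_le_right _ _)
      (le_trans (min_le_right _ _) (le_trans (min_le_right _ _)
      (le_trans (min_le_right _ _) (le_trans (min_le_right _ _) (min_le_left _ _))))))
  have hE7 : eta ≤ K2*k2/(16*K3^2*al) :=
    le_trans (min_le_right _ _) (le_trans (min_le_right _ _)
      (le_trans (min_le_right _ _) (le_trans (min_le_right _ _)
      (le_trans (min_le_right _ _) (le_trans (min_le_right _ _)
      (le_trans (min_le_right _ _) (min_le_left _ _)))))))
  have hE8 : eta ≤ k3*al/(16*K3*c2^2) :=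
    le_trans (min_le_right _ _) (le_trans (min_le_right _ _)
      (le_trans (min_le_right _ _) (le_trans (min_le_right _ _)
      (le_trans (min_le_right _ _) (le_trans (min_le_right _ _)
      (le_trans (min_le_right _ _) (le_trans (min_le_right _ _) (min_le_left _ _))))))))
  have hE9 : eta ≤ dmin/4 :=
    le_trans (min_le_right _ _) (le_trans (min_le_right _ _)
      (le_trans (min_le_right _ _) (le_trans (min_le_right _ _)
      (le_trans (min_le_right _ _) (le_trans (min_le_right _ _)
      (le_trans (min_le_right _ _) (le_trans (min_le_right _ _)
      (le_trans (min_le_right _ _) (min_le_left _ _)))))))))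
  have hE10 : eta ≤ dmin/(4*K2) :=
    le_trans (min_le_right _ _) (le_trans (min_le_right _ _)
      (le_trans (min_le_right _ _) (le_trans (min_le_right _ _)
      (le_trans (min_le_right _ _) (le_trans (min_le_right _ _)
      (le_trans (min_le_right _ _) (le_trans (min_le_right _ _)
      (le_trans (min_le_right _ _) (le_trans (min_le_right _ _) (min_le_left _ _))))))))))
  have hE11 : eta ≤ dmin/(4*K3) :=
    le_trans (min_le_right _ _) (le_trans (min_le_right _ _)
      (le_trans (min_le_right _ _) (le_trans (min_le_right _ _)
      (le_trans (min_le_right _ _) (le_trans (min_le_right _ _)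
      (le_trans (min_le_right _ _) (le_trans (min_le_right _ _)
      (le_trans (min_le_right _ _) (le_trans (min_le_right _ _)
      (le_trans (min_le_right _ _) (min_le_left _ _)))))))))))
  have hE12 : eta ≤ dmin/(4*(m4+1)) :=
    le_trans (min_le_right _ _) (le_trans (min_le_right _ _)
      (le_trans (min_le_right _ _) (le_trans (min_le_right _ _)
      (le_trans (min_le_right _ _) (le_trans (min_le_right _ _)
      (le_trans (min_le_right _ _) (le_trans (min_le_right _ _)
      (le_trans (min_le_right _ _) (le_trans (min_le_right _ _)
      (le_trans (min_le_right _ _) (min_le_right _ _)))))))))))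
  clear_value K2 K3 m4 eta
  clear hK2 hK3 hm4 heta
  have he2 : eta^2 ≤ eta := by
    have h := mul_le_mul_of_nonneg_left he1 hepos.le; linarith only [h]
  have he3 : eta^3 ≤ eta^2 := by
    have h := mul_le_mul_of_nonneg_left he2 hepos.le; linarith only [h]
  have he3e : eta^3 ≤ eta := le_trans he3 he2
  have he31 : eta^3 ≤ 1 := le_trans he3e he1
  have he63 : eta^6 ≤ eta^3 := by
    have h := mul_le_mul_of_nonneg_left he31 (by positivity : (0:ℝ) ≤ eta^3)
    linarith only [h]
  have he64 : eta^6 ≤ eta^4 := by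
    have h := mul_le_mul_of_nonneg_left he2 (by positivity : (0:ℝ) ≤ eta^4)
    have h' := mul_le_mul_of_nonneg_left he1 (by positivity : (0:ℝ) ≤ eta^4)
    linarith only [h, h']
  refine ⟨eta, K2*eta^2, K3*eta^3, m4*eta^3, hepos, by positivity, by positivity,
    by positivity, ?_, ?_, ?_, ?_, ?_, ?_, ?_, ?_, ?_, ?_, ?_, ?_, ?_, ?_, ?_, ?_, ?_⟩
  · -- sum ≤ dmin
    have h9 := (le_div_iff₀ (by positivity)).mp hE9
    have h10 := (le_div_iff₀ (by positivity)).mp hE10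
    have h11 := (le_div_iff₀ (by positivity)).mp hE11
    have h12 := (le_div_iff₀ (by positivity)).mp hE12
    have q2 : K2*eta^2 ≤ K2*eta := mul_le_mul_of_nonneg_left he2 hK2pos.le
    have q3 : K3*eta^3 ≤ K3*eta := mul_le_mul_of_nonneg_left he3e hK3pos.le
    have q4 : m4*eta^3 ≤ m4*eta := mul_le_mul_of_nonneg_left he3e hm4pos.le
    linarith only [q2, q3, q4, h9, h10, h11, h12, hepos]
  · -- t1
    have h := (le_div_iff₀ (by positivity)).mp hE1
    have hp := mul_le_mul_of_nonneg_left h hepos.le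
    linarith only [hp]
  · -- t2
    have hp := mul_le_mul_of_nonneg_left hK2ge'
      (by positivity : (0:ℝ) ≤ k2*eta^2/16)
    linarith only [hp]
  · -- t3
    have h := (le_div_iff₀ (by positivity)).mp hE2
    linarith only [h]
  · -- t4
    have h := (le_div_iff₀ (by positivity)).mp hE3
    have hp := mul_le_mul_of_nonneg_left h hepos.le
    linarith only [hp]
  · -- t5
    have h := (le_div_iff₀ (by positivity)).mp hE4
    have hp := mul_le_mul_of_nonneg_left h (by positivity : (0:ℝ) ≤ K2*eta^3/16)
    have hq := mul_le_mul_of_nonneg_left he3 (by positivity : (0:ℝ) ≤ K2*k2*be/16)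
    linarith only [hp, hq]
  · -- t6
    have h := (le_div_iff₀ (by positivity)).mp hE5
    have hp := mul_le_mul_of_nonneg_left h (by positivity : (0:ℝ) ≤ eta^3/16)
    have hq := mul_le_mul_of_nonneg_left he3e (by positivity : (0:ℝ) ≤ k1*al/16)
    linarith only [hp, hq]
  · -- t7
    have hp := mul_le_mul_of_nonneg_left hK3ge'
      (by positivity : (0:ℝ) ≤ k3*eta^4/16)
    linarith only [hp]
  · -- t8
    have h := (le_div_iff₀ (by positivity)).mp hE6
    have hp := mul_le_mul_of_nonneg_left h (by positivity : (0:ℝ) ≤ K3*eta^4/16)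
    have hq := mul_le_mul_of_nonneg_left he2 (by positivity : (0:ℝ) ≤ K3^2*eta^4)
    linarith only [hp, hq]
  · -- t9
    have h := (le_div_iff₀ (by positivity)).mp hE7
    have hp := mul_le_mul_of_nonneg_left h (by positivity : (0:ℝ) ≤ al*eta^2/16)
    have hq := mul_le_mul_of_nonneg_left he63 (by positivity : (0:ℝ) ≤ K3^2*al^2)
    linarith only [hp, hq]
  · -- t10
    have h := (le_div_iff₀ (by positivity)).mp hE8
    have hp := mul_le_mul_of_nonneg_left h (by positivity : (0:ℝ) ≤ K3*eta^3/16)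
    have hq := mul_le_mul_of_nonneg_left he64 (by positivity : (0:ℝ) ≤ K3^2*c2^2)
    linarith only [hp, hq]
  · -- t11
    have h := (le_div_iff₀ (by positivity)).mp hm4a
    have hp := mul_le_mul_of_nonneg_left he31 (by positivity : (0:ℝ) ≤ m4*f1*g1)
    linarith only [hp, h]
  · -- t12
    have h := (le_div_iff₀ (by positivity)).mp hm4b
    have hp := mul_le_mul_of_nonneg_left h (by positivity : (0:ℝ) ≤ eta^2/8)
    have hq := mul_le_mul_of_nonneg_left he3 (by positivity : (0:ℝ) ≤ m4*f1*g2)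
    have hr : (0:ℝ) ≤ m4*eta^2*f1 := by positivity
    linarith only [hp, hq, hr]
  · -- t13
    have h := (le_div_iff₀ (by positivity)).mp hm4c
    have hp := mul_le_mul_of_nonneg_left h (by positivity : (0:ℝ) ≤ m4*eta^6/16)
    have hq := mul_le_mul_of_nonneg_left he63 (by positivity : (0:ℝ) ≤ m4*al/16)
    linarith only [hp, hq]
  · -- t14
    have h := (le_div_iff₀ (by positivity)).mp hm4d
    have hp := mul_le_mul_of_nonneg_left h (by positivity : (0:ℝ) ≤ m4*eta^6/16)
    linarith only [hp]
  · -- t15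
    have h := (le_div_iff₀ (by positivity)).mp hm4e
    have hp := mul_le_mul_of_nonneg_left he31 (by positivity : (0:ℝ) ≤ 2*m4*f4^2*g1)
    have hr : (0:ℝ) ≤ 2*m4*g1 := by positivity
    linarith only [hp, h, hr]
  · -- t16
    have h := (le_div_iff₀ (by positivity)).mp hm4f
    have hp := mul_le_mul_of_nonneg_left h (by positivity : (0:ℝ) ≤ eta^2/8)
    have hq := mul_le_mul_of_nonneg_left he3 (by positivity : (0:ℝ) ≤ 2*m4*f4^2*g2)
    have hr : (0:ℝ) ≤ 2*m4*eta^2*(f4^2+g2+1) := by positivity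
    linarith only [hp, hq, hr]

lemma vLower (A0 A1 A2 A3 A4 A5 e1 e2 e3 e4 dmin : ℝ)
    (h0 : dmin ≤ A0) (h1 : dmin ≤ A1) (h2 : dmin ≤ A2) (h3 : dmin ≤ A3)
    (h4 : dmin ≤ A4) (h5 : dmin ≤ A5)
    (he1 : 0 ≤ e1) (he2 : 0 ≤ e2) (he3 : 0 ≤ e3) (he4 : 0 ≤ e4)
    (hsum : e1+e2+e3+e4 ≤ dmin) :
    ∀ p1 p2 w1 w2 v P : ℝ,
      (dmin/2)*(p1^2+p2^2+w1^2+w2^2+v^2+P^2) ≤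
      A0*p1^2+A1*p2^2+A2*w1^2+A3*w2^2+A4*v^2+A5*P^2
        +e1*(P*w1)-e2*(p1*w1)-e3*(v*p1)+e4*(p2*w2) := by
  intro p1 p2 w1 w2 v P
  have c1 : -(e1/2)*(P^2+w1^2) ≤ e1*(P*w1) := by nlinarith [sq_nonneg (P+w1)]
  have c2 : e2*(p1*w1) ≤ (e2/2)*(p1^2+w1^2) := by nlinarith [sq_nonneg (p1-w1)]
  have c3 : e3*(v*p1) ≤ (e3/2)*(v^2+p1^2) := by nlinarith [sq_nonneg (v-p1)]
  have c4 : -(e4/2)*(p2^2+w2^2) ≤ e4*(p2*w2) := by nlinarith [sq_nonneg (p2+w2)]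
  have m0 := mul_le_mul_of_nonneg_right h0 (sq_nonneg p1)
  have m1 := mul_le_mul_of_nonneg_right h1 (sq_nonneg p2)
  have m2 := mul_le_mul_of_nonneg_right h2 (sq_nonneg w1)
  have m3 := mul_le_mul_of_nonneg_right h3 (sq_nonneg w2)
  have m4 := mul_le_mul_of_nonneg_right h4 (sq_nonneg v)
  have m5 := mul_le_mul_of_nonneg_right h5 (sq_nonneg P)
  have q1 : (e2+e3)*p1^2 ≤ dmin*p1^2 :=
    mul_le_mul_of_nonneg_right (by linarith) (sq_nonneg p1)
  have q2 : e4*p2^2 ≤ dmin*p2^2 :=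
    mul_le_mul_of_nonneg_right (by linarith) (sq_nonneg p2)
  have q3 : (e1+e2)*w1^2 ≤ dmin*w1^2 :=
    mul_le_mul_of_nonneg_right (by linarith) (sq_nonneg w1)
  have q4 : e4*w2^2 ≤ dmin*w2^2 :=
    mul_le_mul_of_nonneg_right (by linarith) (sq_nonneg w2)
  have q5 : e3*v^2 ≤ dmin*v^2 :=
    mul_le_mul_of_nonneg_right (by linarith) (sq_nonneg v)
  have q6 : e1*P^2 ≤ dmin*P^2 :=
    mul_le_mul_of_nonneg_right (by linarith) (sq_nonneg P)
  linarith only [c1, c2, c3, c4, m0, m1, m2, m3, m4, m5, q1, q2, q3, q4, q5, q6]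

lemma vUpper (A0 A1 A2 A3 A4 A5 e1 e2 e3 e4 b1 b2 : ℝ)
    (h0 : 0 ≤ A0) (h1 : 0 ≤ A1) (h2 : 0 ≤ A2) (h3 : 0 ≤ A3)
    (h4 : 0 ≤ A4) (h5 : 0 ≤ A5)
    (he1 : 0 ≤ e1) (he2 : 0 ≤ e2) (he3 : 0 ≤ e3) (he4 : 0 ≤ e4)
    (hb1 : 0 < b1) (hb2 : 0 < b2) :
    ∀ p1 p2 w1 w2 v P : ℝ,
      A0*p1^2+A1*p2^2+A2*w1^2+A3*w2^2+A4*v^2+A5*P^2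
        +e1*(P*w1)-e2*(p1*w1)-e3*(v*p1)+e4*(p2*w2) ≤
      ((A0+A1+A2+A3+A4+A5+e1+e2+e3+e4)*(1+2/b2^2+2*b1^2/b2^2))*
        ((b1*p1+b2*p2)^2+P^2+w1^2+p1^2+v^2+w2^2) := by
  intro p1 p2 w1 w2 v P
  have c1 : e1*(P*w1) ≤ (e1/2)*(P^2+w1^2) := by nlinarith [sq_nonneg (P-w1)]
  have c2 : -(e2/2)*(p1^2+w1^2) ≤ e2*(p1*w1) := by nlinarith [sq_nonneg (p1+w1)]
  have c3 : -(e3/2)*(v^2+p1^2) ≤ e3*(v*p1) := by nlinarith [sq_nonneg (v+p1)]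
  have c4 : e4*(p2*w2) ≤ (e4/2)*(p2^2+w2^2) := by nlinarith [sq_nonneg (p2-w2)]
  have hp2 : (1:ℝ)*p2^2 ≤ (2/b2^2)*(b1*p1+b2*p2)^2 + (2*b1^2/b2^2)*p1^2 :=
    splitBound b1 b2 (2/b2^2) (2*b1^2/b2^2) 1 p1 p2 hb2 zero_le_one
      (by rw [one_mul]) (by rw [one_mul])
  -- S ≤ c5 * T
  have hST : p1^2+p2^2+w1^2+w2^2+v^2+P^2 ≤
      (1+2/b2^2+2*b1^2/b2^2)*((b1*p1+b2*p2)^2+P^2+w1^2+p1^2+v^2+w2^2) := by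
    have hg1 : (0:ℝ) ≤ 2/b2^2 := by positivity
    have hg2 : (0:ℝ) ≤ 2*b1^2/b2^2 := by positivity
    have r1 : (2/b2^2)*((b1*p1+b2*p2)^2) ≤
        (2/b2^2)*((b1*p1+b2*p2)^2+P^2+w1^2+p1^2+v^2+w2^2) :=
      mul_le_mul_of_nonneg_left (by linarith only [sq_nonneg P, sq_nonneg w1, sq_nonneg p1, sq_nonneg v, sq_nonneg w2]) hg1
    have r2 : (2*b1^2/b2^2)*(p1^2) ≤
        (2*b1^2/b2^2)*((b1*p1+b2*p2)^2+P^2+w1^2+p1^2+v^2+w2^2) :=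
      mul_le_mul_of_nonneg_left (by linarith only [sq_nonneg (b1*p1+b2*p2), sq_nonneg P, sq_nonneg w1, sq_nonneg v, sq_nonneg w2]) hg2
    linarith only [hp2, r1, r2, sq_nonneg (b1*p1+b2*p2)]
  -- Vexpr ≤ K1 * S
  have hS0 : (0:ℝ) ≤ p1^2+p2^2+w1^2+w2^2+v^2+P^2 := by positivity
  have n0 : A0*p1^2 ≤ A0*(p1^2+p2^2+w1^2+w2^2+v^2+P^2) :=
    mul_le_mul_of_nonneg_left (by linarith only [sq_nonneg p2, sq_nonneg w1, sq_nonneg w2, sq_nonneg v, sq_nonneg P]) h0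
  have n1 : A1*p2^2 ≤ A1*(p1^2+p2^2+w1^2+w2^2+v^2+P^2) :=
    mul_le_mul_of_nonneg_left (by linarith only [sq_nonneg p1, sq_nonneg w1, sq_nonneg w2, sq_nonneg v, sq_nonneg P]) h1
  have n2 : A2*w1^2 ≤ A2*(p1^2+p2^2+w1^2+w2^2+v^2+P^2) :=
    mul_le_mul_of_nonneg_left (by linarith only [sq_nonneg p1, sq_nonneg p2, sq_nonneg w2, sq_nonneg v, sq_nonneg P]) h2
  have n3 : A3*w2^2 ≤ A3*(p1^2+p2^2+w1^2+w2^2+v^2+P^2) :=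
    mul_le_mul_of_nonneg_left (by linarith only [sq_nonneg p1, sq_nonneg p2, sq_nonneg w1, sq_nonneg v, sq_nonneg P]) h3
  have n4 : A4*v^2 ≤ A4*(p1^2+p2^2+w1^2+w2^2+v^2+P^2) :=
    mul_le_mul_of_nonneg_left (by linarith only [sq_nonneg p1, sq_nonneg p2, sq_nonneg w1, sq_nonneg w2, sq_nonneg P]) h4
  have n5 : A5*P^2 ≤ A5*(p1^2+p2^2+w1^2+w2^2+v^2+P^2) :=
    mul_le_mul_of_nonneg_left (by linarith only [sq_nonneg p1, sq_nonneg p2, sq_nonneg w1, sq_nonneg w2, sq_nonneg v]) h5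
  have n6 : (e1/2)*(P^2+w1^2) ≤ (e1/2)*(p1^2+p2^2+w1^2+w2^2+v^2+P^2) :=
    mul_le_mul_of_nonneg_left (by linarith only [sq_nonneg p1, sq_nonneg p2, sq_nonneg w2, sq_nonneg v]) (by positivity)
  have n7 : (e2/2)*(p1^2+w1^2) ≤ (e2/2)*(p1^2+p2^2+w1^2+w2^2+v^2+P^2) :=
    mul_le_mul_of_nonneg_left (by linarith only [sq_nonneg p2, sq_nonneg w2, sq_nonneg v, sq_nonneg P]) (by positivity)
  have n8 : (e3/2)*(v^2+p1^2) ≤ (e3/2)*(p1^2+p2^2+w1^2+w2^2+v^2+P^2) :=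
    mul_le_mul_of_nonneg_left (by linarith only [sq_nonneg p2, sq_nonneg w1, sq_nonneg w2, sq_nonneg P]) (by positivity)
  have n9 : (e4/2)*(p2^2+w2^2) ≤ (e4/2)*(p1^2+p2^2+w1^2+w2^2+v^2+P^2) :=
    mul_le_mul_of_nonneg_left (by linarith only [sq_nonneg p1, sq_nonneg w1, sq_nonneg v, sq_nonneg P]) (by positivity)
  have hVS : A0*p1^2+A1*p2^2+A2*w1^2+A3*w2^2+A4*v^2+A5*P^2
      +e1*(P*w1)-e2*(p1*w1)-e3*(v*p1)+e4*(p2*w2) ≤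
      (A0+A1+A2+A3+A4+A5+e1+e2+e3+e4)*(p1^2+p2^2+w1^2+w2^2+v^2+P^2) := by
    have z1 : (0:ℝ) ≤ (e1/2)*(p1^2+p2^2+w1^2+w2^2+v^2+P^2) := mul_nonneg (by positivity) hS0
    have z2 : (0:ℝ) ≤ (e2/2)*(p1^2+p2^2+w1^2+w2^2+v^2+P^2) := mul_nonneg (by positivity) hS0
    have z3 : (0:ℝ) ≤ (e3/2)*(p1^2+p2^2+w1^2+w2^2+v^2+P^2) := mul_nonneg (by positivity) hS0
    have z4 : (0:ℝ) ≤ (e4/2)*(p1^2+p2^2+w1^2+w2^2+v^2+P^2) := mul_nonneg (by positivity) hS0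
    linarith only [c1, c2, c3, c4, n0, n1, n2, n3, n4, n5, n6, n7, n8, n9, z1, z2, z3, z4]
  have hfin := mul_le_mul_of_nonneg_left hST
    (by positivity : (0:ℝ) ≤ A0+A1+A2+A3+A4+A5+e1+e2+e3+e4)
  calc A0*p1^2+A1*p2^2+A2*w1^2+A3*w2^2+A4*v^2+A5*P^2
      +e1*(P*w1)-e2*(p1*w1)-e3*(v*p1)+e4*(p2*w2) ≤
      (A0+A1+A2+A3+A4+A5+e1+e2+e3+e4)*(p1^2+p2^2+w1^2+w2^2+v^2+P^2) := hVS
  _ ≤ (A0+A1+A2+A3+A4+A5+e1+e2+e3+e4)*((1+2/b2^2+2*b1^2/b2^2)*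
        ((b1*p1+b2*p2)^2+P^2+w1^2+p1^2+v^2+w2^2)) := hfin
  _ = ((A0+A1+A2+A3+A4+A5+e1+e2+e3+e4)*(1+2/b2^2+2*b1^2/b2^2))*
        ((b1*p1+b2*p2)^2+P^2+w1^2+p1^2+v^2+w2^2) := by ring

lemma TleS (b1 b2 p1 p2 w1 w2 v P : ℝ) :
    (b1*p1+b2*p2)^2+P^2+w1^2+p1^2+v^2+w2^2 ≤
    (1+2*b1^2+2*b2^2)*(p1^2+p2^2+w1^2+w2^2+v^2+P^2) := by
  have h1 : (b1*p1+b2*p2)^2 ≤ 2*b1^2*p1^2+2*b2^2*p2^2 := by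
    nlinarith [sq_nonneg (b1*p1-b2*p2)]
  have l1 : (0:ℝ) ≤ b1^2*p2^2 := by positivity
  have l2 : (0:ℝ) ≤ b2^2*p1^2 := by positivity
  have l3 : (0:ℝ) ≤ (b1^2+b2^2)*(w1^2+w2^2+v^2+P^2) := by positivity
  have l4 : (0:ℝ) ≤ p2^2 := sq_nonneg p2
  linarith only [h1, l1, l2, l3, l4]

/-- The quadratic Lyapunov function for the wind-turbine/grid model. -/
def Vfun (A0 A1 A2 A3 A4 A5 e1 e2 e3 e4 : ℝ) (x : ℝ → EuclideanSpace ℝ (Fin 6))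
    (s : ℝ) : ℝ :=
  A0*(x s 0*x s 0)+A1*(x s 1*x s 1)+A2*(x s 2*x s 2)+A3*(x s 3*x s 3)
    +A4*(x s 4*x s 4)+A5*(x s 5*x s 5)
    +e1*(x s 5*x s 2)-e2*(x s 0*x s 2)-e3*(x s 4*x s 0)+e4*(x s 1*x s 3)

lemma normsq (y : EuclideanSpace ℝ (Fin 6)) :
    ‖y‖^2 = y 0^2 + y 1^2 + y 2^2 + y 3^2 + y 4^2 + y 5^2 := by
  rw [EuclideanSpace.norm_eq, Real.sq_sqrt (by positivity)]
  simp [Fin.sum_univ_six, sq_abs]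

lemma quantCore (b1 b2 M1 M2 C Tg kg Ktg Ktm Kdg Kdm κ : ℝ)
    (hb1 : 0 < b1) (hb2 : 0 < b2) (hM1 : 0 < M1) (hM2 : 0 < M2) (hC : 0 < C)
    (hTg : 0 < Tg) (hkg : 0 < kg) (hKtg : 0 < Ktg) (hKdg : 0 < Kdg)
    (hKdm : 0 < Kdm) (hκ : 0 ≤ κ) (hKtm : Ktm = Ktg/Kdg*Kdm) :
    ∃ nu Lam lam : ℝ, 0 < nu ∧ 0 < Lam ∧ 0 < lam ∧
      ∀ x : ℝ → EuclideanSpace ℝ (Fin 6),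
        (∀ t : ℝ, 0 ≤ t →
          HasDerivAt (fun s => x s 0)
            (-(Kdg/C)*(b1*x t 0+b2*x t 1) - x t 2 + Ktg*x t 4) t ∧
          HasDerivAt (fun s => x s 1)
            (-(Kdm/C)*(b1*x t 0+b2*x t 1) - x t 3 + Ktm*x t 4) t ∧
          HasDerivAt (fun s => x s 2) ((b1*x t 0 + x t 5)/M1) t ∧
          HasDerivAt (fun s => x s 3) ((b2*x t 1 - κ*x t 3)/M2) t ∧
          HasDerivAt (fun s => x s 4) (-(b1*x t 0 + b2*x t 1)/C) t ∧
          HasDerivAt (fun s => x s 5) ((-kg*x t 2 - x t 5)/Tg) t) →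
        ∀ t : ℝ, 0 ≤ t → nu*‖x t‖^2 ≤ Lam*‖x 0‖^2*Real.exp (-(lam*t)) := by
  have hKtmpos : 0 < Ktm := by rw [hKtm]; positivity
  set dmin : ℝ := min (b1/(2*Kdg)) (min (b2/(2*Kdm)) (min (M1/(2*Kdg))
    (min (M2/(2*Kdm)) (min ((Ktg/Kdg)*C/2) (Tg/(2*(Kdg*kg))))))) with hdm
  have hdminpos : 0 < dmin := by
    rw [hdm]
    exact lt_min (by positivity) (lt_min (by positivity) (lt_min (by positivity)
      (lt_min (by positivity) (lt_min (by positivity) (by positivity)))))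
  have hd0 : dmin ≤ b1/(2*Kdg) := min_le_left _ _
  have hd1 : dmin ≤ b2/(2*Kdm) := le_trans (min_le_right _ _) (min_le_left _ _)
  have hd2 : dmin ≤ M1/(2*Kdg) :=
    le_trans (min_le_right _ _) (le_trans (min_le_right _ _) (min_le_left _ _))
  have hd3 : dmin ≤ M2/(2*Kdm) :=
    le_trans (min_le_right _ _) (le_trans (min_le_right _ _)
      (le_trans (min_le_right _ _) (min_le_left _ _)))
  have hd4 : dmin ≤ (Ktg/Kdg)*C/2 :=
    le_trans (min_le_right _ _) (le_trans (min_le_right _ _)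
      (le_trans (min_le_right _ _) (le_trans (min_le_right _ _) (min_le_left _ _))))
  have hd5 : dmin ≤ Tg/(2*(Kdg*kg)) :=
    le_trans (min_le_right _ _) (le_trans (min_le_right _ _)
      (le_trans (min_le_right _ _) (le_trans (min_le_right _ _) (min_le_right _ _))))
  clear_value dmin
  clear hdm
  obtain ⟨ep1, ep2, ep3, ep4, hep1, hep2, hep3, hep4, hsum,
      t1, t2, t3, t4, t5, t6, t7, t8, t9, t10, t11, t12, t13, t14, t15, t16⟩ :=
    chooseEps (1/C) (1/(Kdg*kg)) (kg/Tg) (b1/M1) Ktg (1/Tg) (1/M1) (Kdg/C)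
      (b2/M2) (Kdm/C) Ktm (κ/M2) (2/b2^2) (2*b1^2/b2^2) dmin
      (by positivity) (by positivity) (by positivity) (by positivity) hKtg
      (by positivity) (by positivity) (by positivity) (by positivity)
      (by positivity) hKtmpos (div_nonneg hκ hM2.le) (by positivity)
      (by positivity) hdminpos
  set mu : ℝ := min ((1/C)/4) (min ((1/(Kdg*kg))/2) (min (3*(ep1*(kg/Tg))/8)
    (min (3*(ep2*(b1/M1))/8) (min (ep3*Ktg/2) (5*ep4/8))))) with hmud
  have hmupos : 0 < mu := by
    rw [hmud]
    have q3 : (0:ℝ) < 3*(ep1*(kg/Tg))/8 := by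
      have := mul_pos hep1 (show (0:ℝ) < kg/Tg by positivity); linarith
    have q4 : (0:ℝ) < 3*(ep2*(b1/M1))/8 := by
      have := mul_pos hep2 (show (0:ℝ) < b1/M1 by positivity); linarith
    have q5 : (0:ℝ) < ep3*Ktg/2 := by
      have := mul_pos hep3 hKtg; linarith
    have q6 : (0:ℝ) < 5*ep4/8 := by linarith
    exact lt_min (by positivity) (lt_min (by positivity) (lt_min q3
      (lt_min q4 (lt_min q5 q6))))
  have hmu1 : mu ≤ (1/C)/4 := min_le_left _ _
  have hmu2 : mu ≤ (1/(Kdg*kg))/2 := le_trans (min_le_right _ _) (min_le_left _ _)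
  have hmu3 : mu ≤ 3*(ep1*(kg/Tg))/8 :=
    le_trans (min_le_right _ _) (le_trans (min_le_right _ _) (min_le_left _ _))
  have hmu4 : mu ≤ 3*(ep2*(b1/M1))/8 :=
    le_trans (min_le_right _ _) (le_trans (min_le_right _ _)
      (le_trans (min_le_right _ _) (min_le_left _ _)))
  have hmu5 : mu ≤ ep3*Ktg/2 :=
    le_trans (min_le_right _ _) (le_trans (min_le_right _ _)
      (le_trans (min_le_right _ _) (le_trans (min_le_right _ _) (min_le_left _ _))))
  have hmu6 : mu ≤ 5*ep4/8 :=
    le_trans (min_le_right _ _) (le_trans (min_le_right _ _)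
      (le_trans (min_le_right _ _) (le_trans (min_le_right _ _) (min_le_right _ _))))
  clear_value mu
  clear hmud
  have key := keyIneq b1 b2 M1 M2 C Tg kg Ktg Ktm Kdg Kdm κ ep1 ep2 ep3 ep4 mu
    hb1 hb2 hM1 hM2 hC hTg hkg hKtg hKdg hKdm hκ hep1 hep2 hep3 hep4
    t1 t2 t3 t4 t5 t6 t7 t8 t9 t10 t11 t12 t13 t14 t15 t16
    hmu1 hmu2 hmu3 hmu4 hmu5 hmu6
  clear t1 t2 t3 t4 t5 t6 t7 t8 t9 t10 t11 t12 t13 t14 t15 t16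
  have hlow := vLower (b1/(2*Kdg)) (b2/(2*Kdm)) (M1/(2*Kdg)) (M2/(2*Kdm))
    ((Ktg/Kdg)*C/2) (Tg/(2*(Kdg*kg))) ep1 ep2 ep3 ep4 dmin hd0 hd1 hd2 hd3 hd4 hd5
    hep1.le hep2.le hep3.le hep4.le hsum
  have hup := vUpper (b1/(2*Kdg)) (b2/(2*Kdm)) (M1/(2*Kdg)) (M2/(2*Kdm))
    ((Ktg/Kdg)*C/2) (Tg/(2*(Kdg*kg))) ep1 ep2 ep3 ep4 b1 b2
    (by positivity) (by positivity) (by positivity) (by positivity)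
    (by positivity) (by positivity) hep1.le hep2.le hep3.le hep4.le hb1 hb2
  set K1 : ℝ := (b1/(2*Kdg)+b2/(2*Kdm)+M1/(2*Kdg)+M2/(2*Kdm)+(Ktg/Kdg)*C/2
    +Tg/(2*(Kdg*kg))+ep1+ep2+ep3+ep4) with hK1d
  have hK1pos : 0 < K1 := by
    rw [hK1d]
    have : (0:ℝ) < b1/(2*Kdg) := by positivity
    have : (0:ℝ) < b2/(2*Kdm) := by positivity
    have : (0:ℝ) < M1/(2*Kdg) := by positivity
    have : (0:ℝ) < M2/(2*Kdm) := by positivity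
    have : (0:ℝ) < (Ktg/Kdg)*C/2 := by positivity
    have : (0:ℝ) < Tg/(2*(Kdg*kg)) := by positivity
    linarith
  clear_value K1
  set Lam : ℝ := K1*(1+2/b2^2+2*b1^2/b2^2) with hLamd
  have hc5pos : (0:ℝ) < 1+2/b2^2+2*b1^2/b2^2 := by positivity
  have hLampos : 0 < Lam := by rw [hLamd]; exact mul_pos hK1pos hc5pos
  clear_value Lam
  clear hLamd hK1d
  set lam : ℝ := mu/Lam with hlamd
  have hlampos : 0 < lam := by rw [hlamd]; exact div_pos hmupos hLampos
  have hmuLam : lam*Lam = mu := by rw [hlamd]; field_simp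
  clear_value lam
  clear hlamd
  refine ⟨dmin/2, Lam*(1+2*b1^2+2*b2^2), lam, half_pos hdminpos,
    mul_pos hLampos (by positivity), hlampos, ?_⟩
  intro x hx
  -- the Lyapunov function along the trajectory
  have hphi : ∀ t : ℝ, 0 ≤ t →
      HasDerivAt (Vfun (b1/(2*Kdg)) (b2/(2*Kdm)) (M1/(2*Kdg)) (M2/(2*Kdm))
        ((Ktg/Kdg)*C/2) (Tg/(2*(Kdg*kg))) ep1 ep2 ep3 ep4 x)
      (-(1/C)*(b1*x t 0+b2*x t 1)^2 - (κ/Kdm)*(x t 3)^2 - (1/(Kdg*kg))*(x t 5)^2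
      + ep1*(-(kg/Tg)*(x t 2)^2 - (1/Tg)*(x t 2*x t 5) + (b1/M1)*(x t 0*x t 5)
          + (1/M1)*(x t 5)^2)
      + ep2*(-(b1/M1)*(x t 0)^2 - (1/M1)*(x t 0*x t 5)
          + (Kdg/C)*(x t 2*(b1*x t 0+b2*x t 1)) + (x t 2)^2 - Ktg*(x t 4*x t 2))
      + ep3*(-Ktg*(x t 4)^2 + (1/C)*(x t 0*(b1*x t 0+b2*x t 1))
          + (Kdg/C)*(x t 4*(b1*x t 0+b2*x t 1)) + (x t 4*x t 2))
      + ep4*(-(x t 3)^2 - (Kdm/C)*(x t 3*(b1*x t 0+b2*x t 1)) + Ktm*(x t 3*x t 4)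
          + (b2/M2)*(x t 1)^2 - (κ/M2)*(x t 3*x t 1))) t := by
    intro t ht
    obtain ⟨h0, h1, h2, h3, h4, h5⟩ := hx t ht
    have H := (((((((((((h0.mul h0).const_mul (b1/(2*Kdg))).add
      ((h1.mul h1).const_mul (b2/(2*Kdm)))).add
      ((h2.mul h2).const_mul (M1/(2*Kdg)))).add
      ((h3.mul h3).const_mul (M2/(2*Kdm)))).add
      ((h4.mul h4).const_mul ((Ktg/Kdg)*C/2))).add
      ((h5.mul h5).const_mul (Tg/(2*(Kdg*kg))))).add
      ((h5.mul h2).const_mul ep1)).sub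
      ((h0.mul h2).const_mul ep2)).sub
      ((h4.mul h0).const_mul ep3)).add
      ((h1.mul h3).const_mul ep4))
    have heq : (-(1/C)*(b1*x t 0+b2*x t 1)^2 - (κ/Kdm)*(x t 3)^2
      - (1/(Kdg*kg))*(x t 5)^2
      + ep1*(-(kg/Tg)*(x t 2)^2 - (1/Tg)*(x t 2*x t 5) + (b1/M1)*(x t 0*x t 5)
          + (1/M1)*(x t 5)^2)
      + ep2*(-(b1/M1)*(x t 0)^2 - (1/M1)*(x t 0*x t 5)
          + (Kdg/C)*(x t 2*(b1*x t 0+b2*x t 1)) + (x t 2)^2 - Ktg*(x t 4*x t 2))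
      + ep3*(-Ktg*(x t 4)^2 + (1/C)*(x t 0*(b1*x t 0+b2*x t 1))
          + (Kdg/C)*(x t 4*(b1*x t 0+b2*x t 1)) + (x t 4*x t 2))
      + ep4*(-(x t 3)^2 - (Kdm/C)*(x t 3*(b1*x t 0+b2*x t 1)) + Ktm*(x t 3*x t 4)
          + (b2/M2)*(x t 1)^2 - (κ/M2)*(x t 3*x t 1))) =
      (b1/(2*Kdg)*((-(Kdg/C)*(b1*x t 0+b2*x t 1) - x t 2 + Ktg*x t 4)*x t 0
        + x t 0*(-(Kdg/C)*(b1*x t 0+b2*x t 1) - x t 2 + Ktg*x t 4))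
      + b2/(2*Kdm)*((-(Kdm/C)*(b1*x t 0+b2*x t 1) - x t 3 + Ktm*x t 4)*x t 1
        + x t 1*(-(Kdm/C)*(b1*x t 0+b2*x t 1) - x t 3 + Ktm*x t 4))
      + M1/(2*Kdg)*((b1*x t 0 + x t 5)/M1*x t 2 + x t 2*((b1*x t 0 + x t 5)/M1))
      + M2/(2*Kdm)*((b2*x t 1 - κ*x t 3)/M2*x t 3 + x t 3*((b2*x t 1 - κ*x t 3)/M2))
      + (Ktg/Kdg)*C/2*(-(b1*x t 0+b2*x t 1)/C*x t 4 + x t 4*(-(b1*x t 0+b2*x t 1)/C))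
      + Tg/(2*(Kdg*kg))*((-kg*x t 2 - x t 5)/Tg*x t 5 + x t 5*((-kg*x t 2 - x t 5)/Tg))
      + ep1*((-kg*x t 2 - x t 5)/Tg*x t 2 + x t 5*((b1*x t 0 + x t 5)/M1))
      - ep2*((-(Kdg/C)*(b1*x t 0+b2*x t 1) - x t 2 + Ktg*x t 4)*x t 2
        + x t 0*((b1*x t 0 + x t 5)/M1))
      - ep3*(-(b1*x t 0+b2*x t 1)/C*x t 0
        + x t 4*(-(Kdg/C)*(b1*x t 0+b2*x t 1) - x t 2 + Ktg*x t 4))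
      + ep4*((-(Kdm/C)*(b1*x t 0+b2*x t 1) - x t 3 + Ktm*x t 4)*x t 3
        + x t 1*((b2*x t 1 - κ*x t 3)/M2))) := by
      rw [hKtm]
      field_simp
      ring
    rw [heq]
    exact H
  -- derivative bound
  have hDbound : ∀ t : ℝ, 0 ≤ t →
      (-(1/C)*(b1*x t 0+b2*x t 1)^2 - (κ/Kdm)*(x t 3)^2 - (1/(Kdg*kg))*(x t 5)^2
      + ep1*(-(kg/Tg)*(x t 2)^2 - (1/Tg)*(x t 2*x t 5) + (b1/M1)*(x t 0*x t 5)
          + (1/M1)*(x t 5)^2)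
      + ep2*(-(b1/M1)*(x t 0)^2 - (1/M1)*(x t 0*x t 5)
          + (Kdg/C)*(x t 2*(b1*x t 0+b2*x t 1)) + (x t 2)^2 - Ktg*(x t 4*x t 2))
      + ep3*(-Ktg*(x t 4)^2 + (1/C)*(x t 0*(b1*x t 0+b2*x t 1))
          + (Kdg/C)*(x t 4*(b1*x t 0+b2*x t 1)) + (x t 4*x t 2))
      + ep4*(-(x t 3)^2 - (Kdm/C)*(x t 3*(b1*x t 0+b2*x t 1)) + Ktm*(x t 3*x t 4)
          + (b2/M2)*(x t 1)^2 - (κ/M2)*(x t 3*x t 1))) ≤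
      -lam * (Vfun (b1/(2*Kdg)) (b2/(2*Kdm)) (M1/(2*Kdg)) (M2/(2*Kdm))
        ((Ktg/Kdg)*C/2) (Tg/(2*(Kdg*kg))) ep1 ep2 ep3 ep4 x t) := by
    intro t _
    have h1 := key (x t 0) (x t 1) (x t 2) (x t 3) (x t 4) (x t 5)
    have h2 := hup (x t 0) (x t 1) (x t 2) (x t 3) (x t 4) (x t 5)
    have h3 := mul_le_mul_of_nonneg_left h2 hlampos.le
    have h4 : lam*(Lam*((b1*x t 0+b2*x t 1)^2+(x t 5)^2+(x t 2)^2+(x t 0)^2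
        +(x t 4)^2+(x t 3)^2)) = mu*((b1*x t 0+b2*x t 1)^2+(x t 5)^2+(x t 2)^2
        +(x t 0)^2+(x t 4)^2+(x t 3)^2) := by
      rw [← hmuLam]; ring
    rw [Vfun]
    linarith only [h1, h3, h4]
  -- Gronwall
  have hanti : AntitoneOn (fun s => (Vfun (b1/(2*Kdg)) (b2/(2*Kdm)) (M1/(2*Kdg))
      (M2/(2*Kdm)) ((Ktg/Kdg)*C/2) (Tg/(2*(Kdg*kg))) ep1 ep2 ep3 ep4 x s)
      * Real.exp (lam*s)) (Set.Ici 0) := by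
    apply antitoneOn_of_deriv_nonpos (convex_Ici 0)
    · intro t ht
      exact (((hphi t ht).continuousAt).mul
        (Real.continuous_exp.comp (continuous_const.mul continuous_id)).continuousAt).continuousWithinAt
    · intro t ht
      rw [interior_Ici] at ht
      have hexp : HasDerivAt (fun s : ℝ => Real.exp (lam*s))
          (Real.exp (lam*t)*(lam*1)) t := ((hasDerivAt_id t).const_mul lam).exp
      exact (((hphi t (le_of_lt ht)).mul hexp)).differentiableAt.differentiableWithinAt
    · intro t ht
      rw [interior_Ici] at ht
      have hexp : HasDerivAt (fun s : ℝ => Real.exp (lam*s))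
          (Real.exp (lam*t)*(lam*1)) t := ((hasDerivAt_id t).const_mul lam).exp
      have hprod : HasDerivAt (fun s => Vfun (b1/(2*Kdg)) (b2/(2*Kdm)) (M1/(2*Kdg))
          (M2/(2*Kdm)) ((Ktg/Kdg)*C/2) (Tg/(2*(Kdg*kg))) ep1 ep2 ep3 ep4 x s
          * Real.exp (lam*s)) _ t := (hphi t (le_of_lt ht)).mul hexp
      rw [hprod.deriv]
      have hle := hDbound t (le_of_lt ht)
      have hfact : (0:ℝ) ≤ -((-(1/C)*(b1*x t 0+b2*x t 1)^2 - (κ/Kdm)*(x t 3)^2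
          - (1/(Kdg*kg))*(x t 5)^2
          + ep1*(-(kg/Tg)*(x t 2)^2 - (1/Tg)*(x t 2*x t 5) + (b1/M1)*(x t 0*x t 5)
              + (1/M1)*(x t 5)^2)
          + ep2*(-(b1/M1)*(x t 0)^2 - (1/M1)*(x t 0*x t 5)
              + (Kdg/C)*(x t 2*(b1*x t 0+b2*x t 1)) + (x t 2)^2 - Ktg*(x t 4*x t 2))
          + ep3*(-Ktg*(x t 4)^2 + (1/C)*(x t 0*(b1*x t 0+b2*x t 1))
              + (Kdg/C)*(x t 4*(b1*x t 0+b2*x t 1)) + (x t 4*x t 2))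
          + ep4*(-(x t 3)^2 - (Kdm/C)*(x t 3*(b1*x t 0+b2*x t 1)) + Ktm*(x t 3*x t 4)
              + (b2/M2)*(x t 1)^2 - (κ/M2)*(x t 3*x t 1)))
          + lam * (Vfun (b1/(2*Kdg)) (b2/(2*Kdm)) (M1/(2*Kdg)) (M2/(2*Kdm))
            ((Ktg/Kdg)*C/2) (Tg/(2*(Kdg*kg))) ep1 ep2 ep3 ep4 x t)) := by
        linarith only [hle]
      have hm := mul_nonneg hfact (Real.exp_pos (lam*t)).le
      linarith only [hm]
  -- conclude
  intro t ht
  have hmono := hanti (Set.self_mem_Ici) ht ht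
  simp only [mul_zero, Real.exp_zero, mul_one] at hmono
  have hEE : Real.exp (lam*t) * Real.exp (-(lam*t)) = 1 := by
    rw [← Real.exp_add]; simp
  have hVt : Vfun (b1/(2*Kdg)) (b2/(2*Kdm)) (M1/(2*Kdg)) (M2/(2*Kdm))
      ((Ktg/Kdg)*C/2) (Tg/(2*(Kdg*kg))) ep1 ep2 ep3 ep4 x t ≤
      (Vfun (b1/(2*Kdg)) (b2/(2*Kdm)) (M1/(2*Kdg)) (M2/(2*Kdm))
      ((Ktg/Kdg)*C/2) (Tg/(2*(Kdg*kg))) ep1 ep2 ep3 ep4 x 0) * Real.exp (-(lam*t)) := by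
    have h := mul_le_mul_of_nonneg_right hmono (Real.exp_pos (-(lam*t))).le
    have h2 : Vfun (b1/(2*Kdg)) (b2/(2*Kdm)) (M1/(2*Kdg)) (M2/(2*Kdm))
        ((Ktg/Kdg)*C/2) (Tg/(2*(Kdg*kg))) ep1 ep2 ep3 ep4 x t
        = (Vfun (b1/(2*Kdg)) (b2/(2*Kdm)) (M1/(2*Kdg)) (M2/(2*Kdm))
        ((Ktg/Kdg)*C/2) (Tg/(2*(Kdg*kg))) ep1 ep2 ep3 ep4 x t
        * Real.exp (lam*t)) * Real.exp (-(lam*t)) := by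
      rw [mul_assoc, hEE, mul_one]
    rw [h2]
    exact h
  -- lower bound at t
  have hlowt := hlow (x t 0) (x t 1) (x t 2) (x t 3) (x t 4) (x t 5)
  have hnormt := normsq (x t)
  have hnorm0 := normsq (x 0)
  -- upper bound at 0
  have hup0 := hup (x 0 0) (x 0 1) (x 0 2) (x 0 3) (x 0 4) (x 0 5)
  have hTS0 := TleS b1 b2 (x 0 0) (x 0 1) (x 0 2) (x 0 3) (x 0 4) (x 0 5)
  have hV0 : Vfun (b1/(2*Kdg)) (b2/(2*Kdm)) (M1/(2*Kdg)) (M2/(2*Kdm))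
      ((Ktg/Kdg)*C/2) (Tg/(2*(Kdg*kg))) ep1 ep2 ep3 ep4 x 0 ≤
      (Lam*(1+2*b1^2+2*b2^2))*‖x 0‖^2 := by
    rw [hnorm0, Vfun]
    have h5 := mul_le_mul_of_nonneg_left hTS0 hLampos.le
    linarith only [hup0, h5]
  have hfin1 : (dmin/2)*‖x t‖^2 ≤ Vfun (b1/(2*Kdg)) (b2/(2*Kdm)) (M1/(2*Kdg))
      (M2/(2*Kdm)) ((Ktg/Kdg)*C/2) (Tg/(2*(Kdg*kg))) ep1 ep2 ep3 ep4 x t := by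
    rw [hnormt, Vfun]
    linarith only [hlowt]
  have hfin2 := mul_le_mul_of_nonneg_right hV0 (Real.exp_pos (-(lam*t))).le
  exact le_trans (le_trans hfin1 hVt) hfin2

/-- **Frequency and DC voltage stability.** If `κ = K_ωr + K_β K_p ≥ 0` and
`K_d^gsc / K_θ^gsc = K_d^msc / K_θ^msc`, then the origin of the linearized
closed-loop system is asymptotically stable: every solution converges to `0`,
and the origin is Lyapunov stable. -/
theorem frequency_and_dc_voltage_stability
    (bg bmsc Jg Jwt ω0 ωdel Cdc Tg kg Kθg Kθm Kdg Kdm Kωr Kβ Kp : ℝ)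
    (hbg : 0 < bg) (hbmsc : 0 < bmsc) (hJg : 0 < Jg) (hJwt : 0 < Jwt)
    (hω0 : 0 < ω0) (hωdel : 0 < ωdel) (hCdc : 0 < Cdc) (hTg : 0 < Tg)
    (hkg : 0 < kg) (hKθg : 0 < Kθg) (hKθm : 0 < Kθm)
    (hKdg : 0 < Kdg) (hKdm : 0 < Kdm)
    (hκ : 0 ≤ Kωr + Kβ * Kp)
    (hratio : Kdg / Kθg = Kdm / Kθm) :
    (∀ x : ℝ → EuclideanSpace ℝ (Fin 6),
      IsSolution Kdg Kdm Kθg Kθm bg bmsc Jg Jwt ω0 ωdel Cdc Tg kg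
        (Kωr + Kβ * Kp) x →
      Tendsto x atTop (𝓝 0)) ∧
    (∀ ε : ℝ, 0 < ε → ∃ δ : ℝ, 0 < δ ∧
      ∀ x : ℝ → EuclideanSpace ℝ (Fin 6),
        IsSolution Kdg Kdm Kθg Kθm bg bmsc Jg Jwt ω0 ωdel Cdc Tg kg
          (Kωr + Kβ * Kp) x →
        ‖x 0‖ < δ → ∀ t : ℝ, 0 ≤ t → ‖x t‖ < ε) := by
  have hKtm : Kθm = Kθg/Kdg*Kdm := by
    have h := (div_eq_div_iff hKθg.ne' hKθm.ne').mp hratio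
    field_simp
    linear_combination h
  obtain ⟨nu, Lam, lam, hnu, hLam, hlam, hQ⟩ :=
    quantCore bg bmsc (Jg*ω0) (Jwt*ωdel) Cdc Tg kg Kθg Kθm Kdg Kdm (Kωr+Kβ*Kp)
      hbg hbmsc (mul_pos hJg hω0) (mul_pos hJwt hωdel) hCdc hTg hkg hKθg hKdg
      hKdm hκ hKtm
  constructor
  · -- convergence
    intro x hx
    have hxQ := hQ x hx
    rw [tendsto_zero_iff_norm_tendsto_zero]
    have hB : (0:ℝ) ≤ Lam*‖x 0‖^2/nu := by positivity
    have hsq : Tendsto (fun t => ‖x t‖^2) atTop (𝓝 0) := by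
      have hexp : Tendsto (fun t : ℝ => Real.exp (-(lam*t))) atTop (𝓝 0) := by
        have h1 : Tendsto (fun t : ℝ => lam * t) atTop atTop :=
          Tendsto.const_mul_atTop hlam tendsto_id
        have h2 : Tendsto (fun t : ℝ => (Real.exp (lam * t))⁻¹) atTop (𝓝 0) :=
          tendsto_inv_atTop_zero.comp (Real.tendsto_exp_atTop.comp h1)
        refine h2.congr (fun t => ?_)
        rw [← Real.exp_neg]
      have hg : Tendsto (fun t : ℝ => (Lam*‖x 0‖^2/nu)*Real.exp (-(lam*t)))
          atTop (𝓝 0) := by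
        have := hexp.const_mul (Lam*‖x 0‖^2/nu)
        simpa using this
      apply squeeze_zero' (Eventually.of_forall (fun t => sq_nonneg _)) ?_ hg
      filter_upwards [eventually_ge_atTop (0:ℝ)] with t ht
      have h := hxQ t ht
      rw [div_mul_eq_mul_div, le_div_iff₀ hnu]
      linarith [h]
    have hsqrt := (Real.continuous_sqrt.tendsto 0).comp hsq
    simp only [Real.sqrt_zero] at hsqrt
    refine hsqrt.congr (fun t => ?_)
    simp only [Function.comp]
    exact Real.sqrt_sq (norm_nonneg _)
  · -- stability
    intro ε hε
    have hδpos : 0 < ε*Real.sqrt (nu/Lam) :=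
      mul_pos hε (Real.sqrt_pos.mpr (div_pos hnu hLam))
    refine ⟨ε*Real.sqrt (nu/Lam), hδpos, ?_⟩
    intro x hx hx0 t ht
    have h := hQ x hx t ht
    have hE1 : Real.exp (-(lam*t)) ≤ 1 := by
      rw [Real.exp_le_one_iff]
      have := mul_nonneg hlam.le ht
      linarith
    have h2 : Lam*‖x 0‖^2*Real.exp (-(lam*t)) ≤ Lam*‖x 0‖^2 := by
      have h2' := mul_le_mul_of_nonneg_left hE1
        (by positivity : (0:ℝ) ≤ Lam*‖x 0‖^2)
      linarith [h2']
    have h3 : ‖x 0‖^2 < (ε*Real.sqrt (nu/Lam))^2 := by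
      have := mul_self_lt_mul_self (norm_nonneg (x 0)) hx0
      nlinarith [this]
    have h4 : (ε*Real.sqrt (nu/Lam))^2 = ε^2*(nu/Lam) := by
      rw [mul_pow, Real.sq_sqrt (div_pos hnu hLam).le]
    have h5 : Lam*(ε^2*(nu/Lam)) = nu*ε^2 := by
      field_simp
    have h6 : nu*‖x t‖^2 < nu*ε^2 := by
      have h7 := mul_lt_mul_of_pos_left h3 hLam
      rw [h4, h5] at h7
      linarith [h, h2, h7]
    have h8 : ‖x t‖^2 < ε^2 := lt_of_mul_lt_mul_left h6 hnu.le
    exact lt_of_pow_lt_pow_left₀ 2 hε.le h8
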